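/- For p = −2, every greedy cover φ' of a set cover instance and every cover φ of the same instance satisfy M_{−2}(φ) ≤ π √(n/6) · M_{−2}(φ'); that is, the greedy algorithm approximates the maximum (−2)-mean set cover problem within a factor of π √(n/6). -/

import Mathlib

open Finset Real

/-- A set cover instance: a collection of subsets of a finite ground set `V` whose union is `V`. -/
structure SetCoverInstance (V : Type*) [Fintype V] [DecidableEq V] where
  sets : Finset (Finset V)
  covers : ∀ v : V, ∃ S ∈ sets, v ∈ S

/-- A cover: an assignment of each element to a subset of the collection containing it. -/
structure Cover {V : Type*} [Fintype V] [DecidableEq V] (I : SetCoverInstance V) where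
  φ : V → Finset V
  mem_sets : ∀ v, φ v ∈ I.sets
  self_mem : ∀ v, v ∈ φ v

variable {V : Type*} [Fintype V] [DecidableEq V] {I : SetCoverInstance V}

/-- `a_v`: the size of the part containing `v`. -/
def Cover.a (c : Cover I) (v : V) : ℕ :=
  (Finset.univ.filter fun w => c.φ w = c.φ v).card

/-- `c_i`: the size of the part assigned to subset `S`. -/
def Cover.partSize (c : Cover I) (S : Finset V) : ℕ :=
  (Finset.univ.filter fun w => c.φ w = S).card

/-- A greedy cover: its parts can be ordered `P 0, …, P (m-1)` so that each `P j` is obtained by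
choosing a subset covering a maximum number of yet-uncovered elements. -/
def Cover.IsGreedy (c : Cover I) : Prop :=
  ∃ (m : ℕ) (P : ℕ → Finset V),
    (∀ v : V, ∃ j < m, v ∈ P j) ∧
    (∀ j < m, ∃ S ∈ I.sets,
      P j = S \ (Finset.range j).biUnion P ∧
      ∀ T ∈ I.sets, (T \ (Finset.range j).biUnion P).card ≤ (P j).card) ∧
    (∀ j < m, ∀ v ∈ P j, (Finset.univ.filter fun w => c.φ w = c.φ v) = P j)

/-- The generalized `p`-mean of the part sizes `a_v`, over the elements. -/
noncomputable def Cover.pMean (c : Cover I) (p : ℝ) : ℝ :=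
  ((1 / (Fintype.card V : ℝ)) * ∑ v : V, (c.a v : ℝ) ^ p) ^ (1 / p)

/-- every greedy cover `c'` and every cover `c` satisfy
`M_{-2}(c) ≤ π √(n/6) · M_{-2}(c')`. -/
lemma basel_partial (N : ℕ) : ∑ i ∈ Finset.range N, (((i:ℝ)+1)^2)⁻¹ ≤ π^2/6 := by
  have h := hasSum_zeta_two
  have h2 : ∑ i ∈ Finset.range (N+1), (1:ℝ)/(i:ℝ)^2 ≤ π^2/6 :=
    sum_le_hasSum _ (fun i _ => by positivity) h
  rw [Finset.sum_range_succ'] at h2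
  calc ∑ i ∈ Finset.range N, (((i:ℝ)+1)^2)⁻¹
      = ∑ i ∈ Finset.range N, (1:ℝ)/((i+1:ℕ):ℝ)^2 := by
        refine Finset.sum_congr rfl fun i _ => ?_; push_cast; rw [one_div]
    _ ≤ π^2/6 := by refine le_trans ?_ h2; simp

lemma rpow_neg_two' (x : ℕ) : (x:ℝ) ^ (-2 : ℝ) = ((x:ℝ)^2)⁻¹ := by
  rw [show (-2:ℝ) = -((2:ℕ):ℝ) by norm_num, Real.rpow_neg (by positivity), Real.rpow_natCast]

lemma majorize {V : Type*} [DecidableEq V] (b : V → ℕ) :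
    ∀ (Q : Finset V), (∀ t : ℕ, (Q.filter (fun v => b v ≤ t)).card ≤ t) →
    ∑ v ∈ Q, (((b v : ℝ))^2)⁻¹ ≤ ∑ i ∈ Finset.range Q.card, (((i:ℝ)+1)^2)⁻¹ := by
  intro Q
  induction Q using Finset.strongInduction with
  | _ Q ih =>
    intro hQ
    rcases Q.eq_empty_or_nonempty with rfl | hne
    · simp
    · obtain ⟨v, hv, hmax⟩ := Finset.exists_max_image Q b hne
      have hcard : Q.card ≤ b v := by
        have : Q ⊆ Q.filter (fun w => b w ≤ b v) := fun w hw =>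
          Finset.mem_filter.2 ⟨hw, hmax w hw⟩
        exact le_trans (Finset.card_le_card this) (hQ (b v))
      have herase := ih (Q.erase v) (Finset.erase_ssubset hv) (fun t =>
        le_trans (Finset.card_le_card (Finset.filter_subset_filter _ (Finset.erase_subset _ _))) (hQ t))
      have hsum : ∑ w ∈ Q, (((b w:ℝ))^2)⁻¹
          = ∑ w ∈ Q.erase v, (((b w:ℝ))^2)⁻¹ + (((b v:ℝ))^2)⁻¹ := by
        rw [Finset.sum_erase_add _ _ hv]
      have hc : (Q.erase v).card = Q.card - 1 := Finset.card_erase_of_mem hv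
      have hQpos : 1 ≤ Q.card := Finset.card_pos.2 hne
      have hrange : Finset.range Q.card = insert (Q.card - 1) (Finset.range (Q.card - 1)) := by
        rw [← Finset.range_add_one]; congr 1; omega
      rw [hsum, hrange, Finset.sum_insert (by simp)]
      have hcast : (((Q.card - 1 : ℕ):ℝ)+1) = (Q.card : ℝ) := by
        norm_cast; omega
      have hlast : (((b v:ℝ))^2)⁻¹ ≤ ((((Q.card - 1 : ℕ):ℝ)+1)^2)⁻¹ := by
        rw [hcast]
        apply inv_anti₀ (by positivity)
        have : (Q.card : ℝ) ≤ (b v : ℝ) := by exact_mod_cast hcard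
        nlinarith [Finset.card_pos.2 hne]
      rw [hc] at herase
      linarith

lemma key_count (c' : Cover I) (hc' : c'.IsGreedy) {S : Finset V} (hS : S ∈ I.sets) (t : ℕ) :
    (S.filter (fun v => c'.a v ≤ t)).card ≤ t := by
  obtain ⟨m, P, hcov, hgr, hparts⟩ := hc'
  by_contra hcon
  push_neg at hcon
  set F := S.filter (fun v => c'.a v ≤ t) with hF
  have hFne : F.Nonempty := Finset.card_pos.1 (by omega)
  have htime : ∀ v : V, ∃ j, j < m ∧ v ∈ P j := by
    intro v; obtain ⟨j, hj, hv⟩ := hcov v; exact ⟨j, hj, hv⟩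
  classical
  let time : V → ℕ := fun v => Nat.find (htime v)
  obtain ⟨v0, hv0F, hv0min⟩ := Finset.exists_min_image F time hFne
  set j0 := time v0 with hj0
  have hj0spec := Nat.find_spec (htime v0)
  have hj0m : j0 < m := hj0spec.1
  have hv0P : v0 ∈ P j0 := hj0spec.2
  have hFun : F ⊆ S \ (Finset.range j0).biUnion P := by
    intro v hvF
    rw [Finset.mem_sdiff]
    refine ⟨(Finset.mem_filter.1 hvF).1, ?_⟩
    intro hmem
    obtain ⟨j, hj, hvj⟩ := Finset.mem_biUnion.1 hmem
    rw [Finset.mem_range] at hj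
    have : time v ≤ j := Nat.find_le ⟨Nat.lt_of_lt_of_le hj (le_of_lt hj0m), hvj⟩
    have := hv0min v hvF
    omega
  obtain ⟨T, hT, hPeq, hmaxi⟩ := hgr j0 hj0m
  have hcard : t < (P j0).card := by
    have h1 : F.card ≤ (S \ (Finset.range j0).biUnion P).card := Finset.card_le_card hFun
    have h2 := hmaxi S hS
    omega
  have := hparts j0 hj0m v0 hv0P
  have ha : c'.a v0 = (P j0).card := by rw [Cover.a, this]
  have : c'.a v0 ≤ t := (Finset.mem_filter.1 hv0F).2
  omega

theorem greedy_negTwoMean_approx (c' : Cover I) (hc' : c'.IsGreedy) (c : Cover I) :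
    c.pMean (-2) ≤ Real.pi * Real.sqrt ((Fintype.card V : ℝ) / 6) * c'.pMean (-2) := by
  classical
  set n := Fintype.card V with hn
  rcases Nat.eq_zero_or_pos n with h0 | hnpos
  · have hempty : (Finset.univ : Finset V) = ∅ := by
      rw [← Finset.card_eq_zero, Finset.card_univ, ← hn, h0]
    have hz : ∀ (d : Cover I), d.pMean (-2) = 0 := by
      intro d
      rw [Cover.pMean]
      rw [show ((Fintype.card V : ℝ)) = 0 by rw [← hn, h0]; simp]
      rw [div_zero, zero_mul, Real.zero_rpow (by norm_num)]
    rw [hz c, hz c']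
    simp
  -- main case
  have hnR : (0:ℝ) < n := by exact_mod_cast hnpos
  have hVne : (Finset.univ : Finset V).Nonempty := by
    rw [← Finset.card_pos, Finset.card_univ]; exact hnpos
  -- rewrite sums
  have hrw : ∀ (d : Cover I), ∑ v : V, (d.a v : ℝ) ^ (-2:ℝ) = ∑ v : V, ((d.a v : ℝ)^2)⁻¹ :=
    fun d => Finset.sum_congr rfl fun v _ => rpow_neg_two' _
  set Sc := ∑ v : V, ((c.a v : ℝ)^2)⁻¹ with hSc
  set Sg := ∑ v : V, ((c'.a v : ℝ)^2)⁻¹ with hSg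
  have hapos : ∀ (d : Cover I) (v : V), 0 < d.a v := fun d v =>
    Finset.card_pos.2 ⟨v, Finset.mem_filter.2 ⟨Finset.mem_univ v, rfl⟩⟩
  have hSgpos : 0 < Sg := Finset.sum_pos (fun v _ => by
    have := hapos c' v; positivity) hVne
  -- fibers of c
  set T := Finset.univ.image c.φ with hT
  set k := T.card with hk
  have hkpos : 0 < k := Finset.card_pos.2 (hVne.image _)
  have hmaps : ∀ v ∈ (Finset.univ : Finset V), c.φ v ∈ T := fun v _ =>
    Finset.mem_image_of_mem _ (Finset.mem_univ v)
  have hfibg : Sg = ∑ S ∈ T, ∑ v ∈ Finset.univ.filter (fun w => c.φ w = S), ((c'.a v : ℝ)^2)⁻¹ :=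
    (Finset.sum_fiberwise_of_maps_to hmaps _).symm
  have hfibc : Sc = ∑ S ∈ T, ∑ v ∈ Finset.univ.filter (fun w => c.φ w = S), ((c.a v : ℝ)^2)⁻¹ :=
    (Finset.sum_fiberwise_of_maps_to hmaps _).symm
  -- upper bound on Sg
  have hSgle : Sg ≤ k * (π^2/6) := by
    rw [hfibg]
    have : ∀ S ∈ T, ∑ v ∈ Finset.univ.filter (fun w => c.φ w = S), ((c'.a v : ℝ)^2)⁻¹ ≤ π^2/6 := by
      intro S hSmem
      obtain ⟨v, _, hveq⟩ := Finset.mem_image.1 hSmem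
      have hSsets : S ∈ I.sets := hveq ▸ c.mem_sets v
      have hsub : Finset.univ.filter (fun w => c.φ w = S) ⊆ S := by
        intro w hw
        have := (Finset.mem_filter.1 hw).2
        exact this ▸ c.self_mem w
      have hmaj := majorize c'.a (Finset.univ.filter (fun w => c.φ w = S)) (fun t =>
        le_trans (Finset.card_le_card (Finset.filter_subset_filter _ hsub))
          (key_count c' hc' hSsets t))
      exact le_trans hmaj (basel_partial _)
    calc ∑ S ∈ T, ∑ v ∈ Finset.univ.filter (fun w => c.φ w = S), ((c'.a v : ℝ)^2)⁻¹
        ≤ ∑ _S ∈ T, (π^2/6) := Finset.sum_le_sum this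
      _ = k * (π^2/6) := by rw [Finset.sum_const, nsmul_eq_mul]
  -- lower bound on Sc
  have hScge : (k:ℝ) / n ≤ Sc := by
    rw [hfibc]
    have : ∀ S ∈ T, (1:ℝ)/n ≤ ∑ v ∈ Finset.univ.filter (fun w => c.φ w = S), ((c.a v : ℝ)^2)⁻¹ := by
      intro S hSmem
      obtain ⟨v0, _, hveq⟩ := Finset.mem_image.1 hSmem
      set Q := Finset.univ.filter (fun w => c.φ w = S) with hQ
      have hQne : Q.Nonempty := ⟨v0, Finset.mem_filter.2 ⟨Finset.mem_univ _, hveq⟩⟩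
      have haeq : ∀ v ∈ Q, c.a v = Q.card := by
        intro v hv
        have hveq2 : c.φ v = S := (Finset.mem_filter.1 hv).2
        rw [Cover.a, hveq2]
      have hsum : ∑ v ∈ Q, ((c.a v : ℝ)^2)⁻¹ = Q.card * (((Q.card:ℕ):ℝ)^2)⁻¹ := by
        rw [Finset.sum_congr rfl (fun v hv => by rw [haeq v hv]), Finset.sum_const, nsmul_eq_mul]
      have hQpos : 0 < Q.card := Finset.card_pos.2 hQne
      have hQn : Q.card ≤ n := by rw [hn, ← Finset.card_univ]; exact Finset.card_le_univ _
      rw [hsum]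
      have hQR : (0:ℝ) < Q.card := by exact_mod_cast hQpos
      rw [show ((Q.card:ℕ):ℝ) * (((Q.card:ℕ):ℝ)^2)⁻¹ = ((Q.card:ℕ):ℝ)⁻¹ by
        field_simp]
      rw [one_div]
      apply inv_anti₀ hQR
      exact_mod_cast hQn
    calc (k:ℝ)/n = ∑ _S ∈ T, (1:ℝ)/n := by rw [Finset.sum_const, nsmul_eq_mul]; ring
      _ ≤ _ := Finset.sum_le_sum this
  have hScpos : 0 < Sc := lt_of_lt_of_le (by positivity) hScge
  -- chain
  have hmain : Sg ≤ (n * (π^2/6)) * Sc := by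
    have h1 : (k:ℝ) * (π^2/6) = (n * (π^2/6)) * ((k:ℝ)/n) := by field_simp
    have h2 : (n * (π^2/6)) * ((k:ℝ)/n) ≤ (n * (π^2/6)) * Sc := by
      apply mul_le_mul_of_nonneg_left hScge
      positivity
    linarith
  -- final rpow manipulation
  rw [Cover.pMean, Cover.pMean, hrw c, hrw c', ← hSc, ← hSg, ← hn]
  have hq : (1 / (-2:ℝ)) = -(1/2) := by norm_num
  rw [hq]
  set A := 1/(n:ℝ) * Sc with hA
  set B := 1/(n:ℝ) * Sg with hB
  have hApos : 0 < A := by rw [hA]; positivity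
  have hBpos : 0 < B := by rw [hB]; positivity
  rw [Real.rpow_neg hApos.le, Real.rpow_neg hBpos.le,
    ← Real.sqrt_eq_rpow, ← Real.sqrt_eq_rpow]
  set C := π * Real.sqrt ((n:ℝ)/6) with hC
  have hCpos : 0 < C := by
    rw [hC]; positivity
  have hBA : B ≤ C^2 * A := by
    have hC2 : C^2 = π^2 * ((n:ℝ)/6) := by
      rw [hC, mul_pow, Real.sq_sqrt (by positivity)]
    rw [hC2, hA, hB]
    have : π^2 * ((n:ℝ)/6) * (1/(n:ℝ) * Sc) = 1/(n:ℝ) * ((n * (π^2/6)) * Sc) := by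
      field_simp
    rw [this]
    apply mul_le_mul_of_nonneg_left hmain
    positivity
  have hsqrt : Real.sqrt B ≤ C * Real.sqrt A := by
    calc Real.sqrt B ≤ Real.sqrt (C^2 * A) := Real.sqrt_le_sqrt hBA
      _ = C * Real.sqrt A := by
          rw [Real.sqrt_mul (by positivity), Real.sqrt_sq hCpos.le]
  have hsBpos : 0 < Real.sqrt B := Real.sqrt_pos.2 hBpos
  have hinv := inv_anti₀ hsBpos hsqrt
  have := mul_le_mul_of_nonneg_left hinv hCpos.le
  rw [mul_inv, ← mul_assoc, mul_inv_cancel₀ hCpos.ne', one_mul] at this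
  exact this
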